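/- arXiv:1310.1673 — 2 statements merged into one kernel-verified Lean document; each statement's English description precedes it below -/
import Mathlib

section
/- Let B_N ⊂ ℝ² be the ball of radius N ≥ 1, let 0 ≤ ρ ≤ M₁ on B_N with ∫_{B_N} ρ dx ≥ M₂ > 0, and let v ∈ H¹(B_N). Denote by v_{B_N} and ρ_{B_N} the averages of v and ρ over B_N. Then |ρ_{B_N} v_{B_N}| ≤ 8 M₁ ‖∇v‖_{L²(B_N)} + M₁^{1/2} N^{-1} ‖ρ^{1/2} v‖_{L²(B_N)}. -/
set_option maxHeartbeats 1000000
open MeasureTheory ENNReal Metric Set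

local notation "E2" => EuclideanSpace ℝ (Fin 2)

lemma aux_scaling (G : E2 → ℝ≥0∞) (hG : Measurable G) {a : ℝ} (ha : a ≠ 0) (w : E2) :
    ∫⁻ y, G (a • y + w) = ENNReal.ofReal |(a ^ 2)⁻¹| * ∫⁻ z, G z := by
  have h1 : (∫⁻ z, G (z + w)) = ∫⁻ z, G z :=
    lintegral_add_right_eq_self (fun z => G z) w
  calc ∫⁻ y, G (a • y + w) = ∫⁻ z, G (z + w) ∂(Measure.map (a • ·) volume) :=
        (lintegral_map (hG.comp (measurable_add_const w)) (measurable_const_smul a)).symm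
    _ = ENNReal.ofReal |(a ^ Module.finrank ℝ E2)⁻¹| * ∫⁻ z, G (z + w) := by
        rw [Measure.map_addHaar_smul volume ha, lintegral_smul_measure, smul_eq_mul]
    _ = _ := by rw [finrank_euclideanSpace_fin, h1]

lemma aux_shrink (G : E2 → ℝ≥0∞) (hG : Measurable G) {a : ℝ} (ha : 1/2 ≤ a) (ha1 : a ≤ 1)
    (w : E2) (s : Set E2) :
    ∫⁻ y in s, G (a • y + w) ≤ 4 * ∫⁻ z, G z := by
  have ha0 : a ≠ 0 := by intro h; rw [h] at ha; norm_num at ha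
  calc ∫⁻ y in s, G (a • y + w) ≤ ∫⁻ y, G (a • y + w) := setLIntegral_le_lintegral _ _
    _ = ENNReal.ofReal |(a ^ 2)⁻¹| * ∫⁻ z, G z := aux_scaling G hG ha0 w
    _ ≤ 4 * ∫⁻ z, G z := by
        gcongr
        have h2 : |(a ^ 2)⁻¹| ≤ 4 := by
          rw [abs_of_nonneg (by positivity)]
          rw [inv_le_comm₀ (by positivity) (by norm_num)]
          nlinarith
        calc ENNReal.ofReal |(a ^ 2)⁻¹| ≤ ENNReal.ofReal 4 := ENNReal.ofReal_le_ofReal h2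
          _ = 4 := by norm_num

lemma aux_segment {N : ℝ} (hN : 0 < N) (v : E2 → ℝ) (hv : Differentiable ℝ v)
    (x y : E2) (hxy : ‖x - y‖ ≤ 2 * N) :
    ENNReal.ofReal |v x - v y| ≤
      ENNReal.ofReal (2 * N) * ∫⁻ t in Icc (0:ℝ) 1, (‖fderiv ℝ v (y + t • (x - y))‖₊ : ℝ≥0∞) := by
  set γ : ℝ → E2 := fun t => y + t • (x - y) with hγ
  have hγm : Measurable γ := (measurable_id.smul_const (x - y)).const_add y
  have hFm : Measurable fun t => (‖fderiv ℝ v (γ t)‖₊ : ℝ≥0∞) :=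
    ((measurable_fderiv ℝ v).comp hγm).nnnorm.coe_nnreal_ennreal
  by_cases hL : (∫⁻ t in Icc (0:ℝ) 1, (‖fderiv ℝ v (γ t)‖₊ : ℝ≥0∞)) = ⊤
  · rw [hL, ENNReal.mul_top (by simp [hN.le]; positivity)]
    exact le_top
  · set f' : ℝ → ℝ := fun t => fderiv ℝ v (γ t) (x - y) with hf'
    have hf'm : Measurable f' := (measurable_fderiv_apply_const ℝ v (x - y)).comp hγm
    have hbound : ∀ t, (‖f' t‖₊ : ℝ≥0∞) ≤ (‖fderiv ℝ v (γ t)‖₊ : ℝ≥0∞) * ‖x - y‖₊ := by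
      intro t
      rw [← ENNReal.coe_mul]
      exact_mod_cast (fderiv ℝ v (γ t)).le_opNNNorm (x - y)
    have hint : IntegrableOn f' (Icc (0:ℝ) 1) := by
      refine ⟨hf'm.aestronglyMeasurable, ?_⟩
      rw [hasFiniteIntegral_def]
      calc ∫⁻ t in Icc (0:ℝ) 1, (‖f' t‖₊ : ℝ≥0∞)
          ≤ ∫⁻ t in Icc (0:ℝ) 1, (‖fderiv ℝ v (γ t)‖₊ : ℝ≥0∞) * ‖x - y‖₊ :=
            lintegral_mono fun t => hbound t
        _ = (∫⁻ t in Icc (0:ℝ) 1, (‖fderiv ℝ v (γ t)‖₊ : ℝ≥0∞)) * ‖x - y‖₊ :=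
            lintegral_mul_const' _ _ ENNReal.coe_ne_top
        _ < ⊤ := ENNReal.mul_lt_top (lt_top_iff_ne_top.2 hL) ENNReal.coe_lt_top
    have hderiv : ∀ t ∈ uIcc (0:ℝ) 1, HasDerivAt (fun s => v (γ s)) (f' t) t := by
      intro t _
      have h1 : HasDerivAt γ (x - y) t := by
        have h0 : HasDerivAt (fun s : ℝ => s • (x - y)) ((1:ℝ) • (x - y)) t :=
          (hasDerivAt_id t).smul_const (x - y)
        simpa [hγ] using h0.const_add y
      exact (hv (γ t)).hasFDerivAt.comp_hasDerivAt t h1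
    have hii : IntervalIntegrable f' volume 0 1 :=
      (intervalIntegrable_iff_integrableOn_Icc_of_le zero_le_one).2 hint
    have key : v x - v y = ∫ t in (0:ℝ)..1, f' t := by
      rw [intervalIntegral.integral_eq_sub_of_hasDerivAt hderiv hii]
      simp [hγ]
    calc ENNReal.ofReal |v x - v y| = ENNReal.ofReal |∫ t in (0:ℝ)..1, f' t| := by rw [key]
      _ ≤ ENNReal.ofReal (∫ t in (0:ℝ)..1, ‖f' t‖) :=
          ENNReal.ofReal_le_ofReal (by
            simpa using intervalIntegral.norm_integral_le_integral_norm (f := f') zero_le_one)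
      _ = ENNReal.ofReal (∫ t in Ioc (0:ℝ) 1, ‖f' t‖) := by
          rw [intervalIntegral.integral_of_le zero_le_one]
      _ = ∫⁻ t in Ioc (0:ℝ) 1, ENNReal.ofReal ‖f' t‖ :=
          ofReal_integral_eq_lintegral_ofReal ((hint.mono_set Ioc_subset_Icc_self).norm)
            (Filter.Eventually.of_forall fun t => norm_nonneg _)
      _ ≤ ∫⁻ t in Icc (0:ℝ) 1, ENNReal.ofReal ‖f' t‖ := lintegral_mono_set Ioc_subset_Icc_self
      _ ≤ ∫⁻ t in Icc (0:ℝ) 1, ENNReal.ofReal (2 * N) * (‖fderiv ℝ v (γ t)‖₊ : ℝ≥0∞) := by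
          refine lintegral_mono fun t => ?_
          rw [ofReal_norm, enorm_eq_nnnorm]
          calc (‖f' t‖₊ : ℝ≥0∞) ≤ (‖fderiv ℝ v (γ t)‖₊ : ℝ≥0∞) * ‖x - y‖₊ := hbound t
            _ ≤ (‖fderiv ℝ v (γ t)‖₊ : ℝ≥0∞) * ENNReal.ofReal (2 * N) := by
                gcongr
                rw [← enorm_eq_nnnorm, ← ofReal_norm]
                exact ENNReal.ofReal_le_ofReal hxy
            _ = ENNReal.ofReal (2 * N) * (‖fderiv ℝ v (γ t)‖₊ : ℝ≥0∞) := mul_comm _ _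
      _ = ENNReal.ofReal (2 * N) * ∫⁻ t in Icc (0:ℝ) 1, (‖fderiv ℝ v (γ t)‖₊ : ℝ≥0∞) :=
          lintegral_const_mul' _ _ ENNReal.ofReal_ne_top

lemma poincare {N : ℝ} (hN : 0 < N) (v : E2 → ℝ) (hv : Differentiable ℝ v)
    (hvi : IntegrableOn v (ball (0:E2) N)) :
    ∫⁻ x in ball (0:E2) N, ENNReal.ofReal |v x - ⨍ y in ball (0:E2) N, v y| ≤
      ENNReal.ofReal (8 * N) * ∫⁻ z in ball (0:E2) N, (‖fderiv ℝ v z‖₊ : ℝ≥0∞) := by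
  set B : Set E2 := ball (0:E2) N with hB
  have hBm : MeasurableSet B := measurableSet_ball
  have hμB_ne_top : volume B ≠ ⊤ := measure_ball_lt_top.ne
  haveI : IsFiniteMeasure (volume.restrict B) :=
    ⟨by rwa [Measure.restrict_apply_univ, lt_top_iff_ne_top]⟩
  set c : ℝ := (volume B).toReal with hc
  have hc0 : 0 < c := ENNReal.toReal_pos (measure_ball_pos volume _ hN).ne' hμB_ne_top
  set G : E2 → ℝ≥0∞ := Set.indicator B (fun z => (‖fderiv ℝ v z‖₊ : ℝ≥0∞)) with hG
  have hGm : Measurable G :=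
    ((measurable_fderiv ℝ v).nnnorm.coe_nnreal_ennreal).indicator hBm
  set I : ℝ≥0∞ := ∫⁻ z in B, (‖fderiv ℝ v z‖₊ : ℝ≥0∞) with hI
  have hIG : (∫⁻ z, G z) = I := lintegral_indicator hBm _
  -- step A
  have stepA : ∀ x : E2, ENNReal.ofReal |v x - ⨍ y in B, v y| ≤
      ENNReal.ofReal c⁻¹ * ∫⁻ y in B, ENNReal.ofReal |v x - v y| := by
    intro x
    have h1 : v x - ⨍ y in B, v y = c⁻¹ * ∫ y in B, (v x - v y) := by
      rw [integral_sub (integrable_const _) hvi, integral_const, setAverage_eq,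
        measureReal_restrict_apply_univ, measureReal_def, ← hc, smul_eq_mul, smul_eq_mul]
      field_simp
    have hi : IntegrableOn (fun y => v x - v y) B := (integrable_const _).sub hvi
    calc ENNReal.ofReal |v x - ⨍ y in B, v y|
        = ENNReal.ofReal c⁻¹ * ENNReal.ofReal |∫ y in B, (v x - v y)| := by
          rw [h1, abs_mul, abs_of_nonneg (inv_nonneg.2 hc0.le),
            ENNReal.ofReal_mul (inv_nonneg.2 hc0.le)]
      _ ≤ ENNReal.ofReal c⁻¹ * ∫⁻ y in B, ENNReal.ofReal |v x - v y| := by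
          gcongr
          calc ENNReal.ofReal |∫ y in B, (v x - v y)|
              ≤ ENNReal.ofReal (∫ y in B, |v x - v y|) := by
                refine ENNReal.ofReal_le_ofReal ?_
                simpa [Real.norm_eq_abs] using
                  norm_integral_le_integral_norm (f := fun y => v x - v y)
                    (μ := volume.restrict B)
            _ = ∫⁻ y in B, ENNReal.ofReal |v x - v y| :=
                ofReal_integral_eq_lintegral_ofReal hi.abs
                  (Filter.Eventually.of_forall fun y => abs_nonneg _)
  -- joint measurability
  have hj3 : Measurable fun p : (E2 × E2) × ℝ => G (p.1.2 + p.2 • (p.1.1 - p.1.2)) := by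
    have hcont : Continuous fun p : (E2 × E2) × ℝ => p.1.2 + p.2 • (p.1.1 - p.1.2) :=
      (continuous_fst.snd).add (continuous_snd.smul (continuous_fst.fst.sub continuous_fst.snd))
    exact hGm.comp hcont.measurable
  have hF2 : Measurable fun q : E2 × E2 => ∫⁻ t in Icc (0:ℝ) 1, G (q.2 + t • (q.1 - q.2)) :=
    Measurable.lintegral_prod_right' (f := fun p : (E2 × E2) × ℝ => G (p.1.2 + p.2 • (p.1.1 - p.1.2))) hj3
  -- step B : bound double integral by triple with G
  set T : ℝ≥0∞ := ∫⁻ x in B, ∫⁻ y in B, ∫⁻ t in Icc (0:ℝ) 1, G (y + t • (x - y)) with hT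
  have stepB : (∫⁻ x in B, ∫⁻ y in B, ENNReal.ofReal |v x - v y|) ≤ ENNReal.ofReal (2*N) * T := by
    rw [hT, ← lintegral_const_mul' _ _ ENNReal.ofReal_ne_top]
    refine setLIntegral_mono' hBm fun x hx => ?_
    rw [← lintegral_const_mul' _ _ ENNReal.ofReal_ne_top]
    refine setLIntegral_mono' hBm fun y hy => ?_
    have hxy : ‖x - y‖ ≤ 2 * N := by
      have h1 : ‖x‖ < N := mem_ball_zero_iff.1 hx
      have h2 : ‖y‖ < N := mem_ball_zero_iff.1 hy
      calc ‖x - y‖ ≤ ‖x‖ + ‖y‖ := norm_sub_le x y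
        _ ≤ 2 * N := by linarith
    have hseg := aux_segment hN v hv x y hxy
    refine hseg.trans ?_
    refine mul_le_mul_right (le_of_eq (setLIntegral_congr_fun measurableSet_Icc
      (fun t ht => ?_))) _
    rw [hG, Set.indicator_of_mem]
    have hconv : y + t • (x - y) = (1 - t) • y + t • x := by module
    rw [hconv]
    exact (convex_ball (0:E2) N) hy hx (by linarith [ht.2]) ht.1 (by ring)
  -- Tonelli: bring t outside
  have hswap1 : ∀ x : E2, (∫⁻ y in B, ∫⁻ t in Icc (0:ℝ) 1, G (y + t • (x - y)))
      = ∫⁻ t in Icc (0:ℝ) 1, ∫⁻ y in B, G (y + t • (x - y)) := by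
    intro x
    have hcont : Continuous fun p : E2 × ℝ => p.1 + p.2 • (x - p.1) :=
      continuous_fst.add (continuous_snd.smul (continuous_const.sub continuous_fst))
    exact lintegral_lintegral_swap (hGm.comp hcont.measurable).aemeasurable
  have hswap2 : T = ∫⁻ t in Icc (0:ℝ) 1, ∫⁻ x in B, ∫⁻ y in B, G (y + t • (x - y)) := by
    rw [hT, lintegral_congr fun x => hswap1 x]
    refine lintegral_lintegral_swap ?_
    have hm : Measurable fun p : E2 × ℝ => ∫⁻ y in B, G (y + p.2 • (p.1 - y)) := by
      refine Measurable.lintegral_prod_right'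
        (f := fun q : (E2 × ℝ) × E2 => G (q.2 + q.1.2 • (q.1.1 - q.2))) ?_
      have hcont : Continuous fun q : (E2 × ℝ) × E2 => q.2 + q.1.2 • (q.1.1 - q.2) :=
        continuous_snd.add ((continuous_fst.snd).smul (continuous_fst.fst.sub continuous_snd))
      exact hGm.comp hcont.measurable
    exact hm.aemeasurable
  have hpart1 : (∫⁻ t in Icc (0:ℝ) (1/2), ∫⁻ x in B, ∫⁻ y in B, G (y + t • (x - y)))
      ≤ (4 * I * volume B) * ENNReal.ofReal (1/2) := by
    calc ∫⁻ t in Icc (0:ℝ) (1/2), ∫⁻ x in B, ∫⁻ y in B, G (y + t • (x - y))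
        ≤ ∫⁻ _t in Icc (0:ℝ) (1/2), (4 * I * volume B) := by
          refine setLIntegral_mono' measurableSet_Icc fun t ht => ?_
          calc ∫⁻ x in B, ∫⁻ y in B, G (y + t • (x - y))
              ≤ ∫⁻ _x in B, (4 * I) := by
                refine setLIntegral_mono' hBm fun x _hx => ?_
                calc (∫⁻ y in B, G (y + t • (x - y)))
                    = ∫⁻ y in B, G ((1 - t) • y + t • x) :=
                      lintegral_congr fun y => by
                        rw [show y + t • (x - y) = (1 - t) • y + t • x by module]
                  _ ≤ 4 * ∫⁻ z, G z :=
                      aux_shrink G hGm (by linarith [ht.2]) (by linarith [ht.1]) _ _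
                  _ = 4 * I := by rw [hIG]
            _ = 4 * I * volume B := by rw [setLIntegral_const]
      _ = (4 * I * volume B) * ENNReal.ofReal (1/2 - 0) := by
          rw [setLIntegral_const, Real.volume_Icc]
      _ = (4 * I * volume B) * ENNReal.ofReal (1/2) := by norm_num
  have hpart2 : (∫⁻ t in Ioc (1/2:ℝ) 1, ∫⁻ x in B, ∫⁻ y in B, G (y + t • (x - y)))
      ≤ (4 * I * volume B) * ENNReal.ofReal (1/2) := by
    calc ∫⁻ t in Ioc (1/2:ℝ) 1, ∫⁻ x in B, ∫⁻ y in B, G (y + t • (x - y))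
        ≤ ∫⁻ _t in Ioc (1/2:ℝ) 1, (4 * I * volume B) := by
          refine setLIntegral_mono' measurableSet_Ioc fun t ht => ?_
          have hswapxy : (∫⁻ x in B, ∫⁻ y in B, G (y + t • (x - y)))
              = ∫⁻ y in B, ∫⁻ x in B, G (y + t • (x - y)) := by
            have hcont : Continuous fun p : E2 × E2 => p.2 + t • (p.1 - p.2) :=
              continuous_snd.add ((continuous_fst.sub continuous_snd).const_smul t)
            exact lintegral_lintegral_swap (hGm.comp hcont.measurable).aemeasurable
          rw [hswapxy]
          calc ∫⁻ y in B, ∫⁻ x in B, G (y + t • (x - y))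
              ≤ ∫⁻ _y in B, (4 * I) := by
                refine setLIntegral_mono' hBm fun y _hy => ?_
                calc (∫⁻ x in B, G (y + t • (x - y)))
                    = ∫⁻ x in B, G (t • x + (y - t • y)) :=
                      lintegral_congr fun x => by
                        rw [show y + t • (x - y) = t • x + (y - t • y) by module]
                  _ ≤ 4 * ∫⁻ z, G z :=
                      aux_shrink G hGm (by linarith [ht.1]) ht.2 _ _
                  _ = 4 * I := by rw [hIG]
            _ = 4 * I * volume B := by rw [setLIntegral_const]
      _ = (4 * I * volume B) * ENNReal.ofReal (1 - 1/2) := by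
          rw [setLIntegral_const, Real.volume_Ioc]
      _ = (4 * I * volume B) * ENNReal.ofReal (1/2) := by norm_num
  have hTbound : T ≤ 4 * I * volume B := by
    have hsplitset : Icc (0:ℝ) 1 = Icc 0 (1/2) ∪ Ioc (1/2) 1 :=
      (Icc_union_Ioc_eq_Icc (by norm_num) (by norm_num)).symm
    have hdisj : Disjoint (Icc (0:ℝ) (1/2)) (Ioc (1/2:ℝ) 1) := by
      rw [Set.disjoint_left]
      rintro a ⟨_, h1⟩ ⟨h2, _⟩
      linarith
    rw [hswap2, hsplitset, lintegral_union measurableSet_Ioc hdisj]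
    calc (∫⁻ t in Icc (0:ℝ) (1/2), ∫⁻ x in B, ∫⁻ y in B, G (y + t • (x - y)))
          + ∫⁻ t in Ioc (1/2:ℝ) 1, ∫⁻ x in B, ∫⁻ y in B, G (y + t • (x - y))
        ≤ (4 * I * volume B) * ENNReal.ofReal (1/2) + (4 * I * volume B) * ENNReal.ofReal (1/2) :=
          add_le_add hpart1 hpart2
      _ = (4 * I * volume B) * (ENNReal.ofReal (1/2) + ENNReal.ofReal (1/2)) := (mul_add _ _ _).symm
      _ = 4 * I * volume B := by
          rw [← ENNReal.ofReal_add (by norm_num) (by norm_num)]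
          norm_num
  calc ∫⁻ x in B, ENNReal.ofReal |v x - ⨍ y in B, v y|
      ≤ ∫⁻ x in B, (ENNReal.ofReal c⁻¹ * ∫⁻ y in B, ENNReal.ofReal |v x - v y|) :=
        lintegral_mono fun x => stepA x
    _ = ENNReal.ofReal c⁻¹ * ∫⁻ x in B, ∫⁻ y in B, ENNReal.ofReal |v x - v y| :=
        lintegral_const_mul' _ _ ENNReal.ofReal_ne_top
    _ ≤ ENNReal.ofReal c⁻¹ * (ENNReal.ofReal (2*N) * T) := mul_le_mul_right stepB _
    _ ≤ ENNReal.ofReal c⁻¹ * (ENNReal.ofReal (2*N) * (4 * I * volume B)) := by gcongr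
    _ = ENNReal.ofReal (8*N) * I := by
        rw [show volume B = ENNReal.ofReal c from (ENNReal.ofReal_toReal hμB_ne_top).symm,
          show (4:ℝ≥0∞) = ENNReal.ofReal (4:ℝ) by norm_num]
        rw [show ENNReal.ofReal c⁻¹ * (ENNReal.ofReal (2*N) * (ENNReal.ofReal 4 * I * ENNReal.ofReal c))
            = (ENNReal.ofReal c⁻¹ * ENNReal.ofReal c) * (ENNReal.ofReal (2*N) * ENNReal.ofReal 4) * I
            by ring]
        rw [← ENNReal.ofReal_mul (by positivity), inv_mul_cancel₀ hc0.ne', ENNReal.ofReal_one,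
          one_mul, ← ENNReal.ofReal_mul (by positivity)]
        congr 1
        ring

lemma cs_int {α : Type*} [MeasurableSpace α] (μ : Measure α) (f g : α → ℝ)
    (hf : ∀ x, 0 ≤ f x) (hg : ∀ x, 0 ≤ g x)
    (hfm : AEStronglyMeasurable f μ) (hgm : AEStronglyMeasurable g μ)
    (hf2 : Integrable (fun x => f x ^ 2) μ) (hg2 : Integrable (fun x => g x ^ 2) μ) :
    ∫ x, f x * g x ∂μ ≤ Real.sqrt (∫ x, f x ^ 2 ∂μ) * Real.sqrt (∫ x, g x ^ 2 ∂μ) := by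
  have hpq : (2:ℝ).HolderConjugate 2 := Real.HolderConjugate.two_two
  have h2 : ENNReal.ofReal (2:ℝ) = 2 := by norm_num
  have hmf : MemLp f (ENNReal.ofReal 2) μ := by
    rw [h2]; exact (memLp_two_iff_integrable_sq hfm).2 hf2
  have hmg : MemLp g (ENNReal.ofReal 2) μ := by
    rw [h2]; exact (memLp_two_iff_integrable_sq hgm).2 hg2
  have := integral_mul_le_Lp_mul_Lq_of_nonneg hpq
    (Filter.Eventually.of_forall hf) (Filter.Eventually.of_forall hg) hmf hmg
  simp only [Real.rpow_two] at this
  calc ∫ x, f x * g x ∂μ ≤ (∫ x, f x ^ 2 ∂μ) ^ (1/(2:ℝ)) * (∫ x, g x ^ 2 ∂μ) ^ (1/(2:ℝ)) := this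
    _ = Real.sqrt (∫ x, f x ^ 2 ∂μ) * Real.sqrt (∫ x, g x ^ 2 ∂μ) := by
      rw [Real.sqrt_eq_rpow, Real.sqrt_eq_rpow]

/-- Estimate of the product of averages over a ball B_N in ℝ². -/
theorem average_product_estimate (N M₁ M₂ : ℝ) (hN : 1 ≤ N) (hM₁ : 0 < M₁) (hM₂ : 0 < M₂)
    (ρ v : EuclideanSpace ℝ (Fin 2) → ℝ)
    (hρ : ∀ x, 0 ≤ ρ x ∧ ρ x ≤ M₁)
    (hmass : M₂ ≤ ∫ x in Metric.ball (0 : EuclideanSpace ℝ (Fin 2)) N, ρ x)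
    (hv : Differentiable ℝ v)
    (hvL2 : IntegrableOn (fun x => (v x) ^ 2) (Metric.ball (0 : EuclideanSpace ℝ (Fin 2)) N) volume)
    (hgrad : IntegrableOn (fun x => ‖fderiv ℝ v x‖ ^ 2)
      (Metric.ball (0 : EuclideanSpace ℝ (Fin 2)) N) volume) :
    |(⨍ x in Metric.ball (0 : EuclideanSpace ℝ (Fin 2)) N, ρ x) *
        (⨍ x in Metric.ball (0 : EuclideanSpace ℝ (Fin 2)) N, v x)| ≤
      8 * M₁ * Real.sqrt (∫ x in Metric.ball (0 : EuclideanSpace ℝ (Fin 2)) N, ‖fderiv ℝ v x‖ ^ 2) +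
        Real.sqrt M₁ * N⁻¹ *
          Real.sqrt (∫ x in Metric.ball (0 : EuclideanSpace ℝ (Fin 2)) N, ρ x * (v x) ^ 2) := by
  have hN0 : (0:ℝ) < N := lt_of_lt_of_le one_pos hN
  set B : Set E2 := Metric.ball (0 : E2) N with hB
  have hBm : MeasurableSet B := measurableSet_ball
  have hμB_ne_top : volume B ≠ ⊤ := measure_ball_lt_top.ne
  haveI : IsFiniteMeasure (volume.restrict B) :=
    ⟨by rwa [Measure.restrict_apply_univ, lt_top_iff_ne_top]⟩
  set c : ℝ := (volume B).toReal with hc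
  have hc0 : 0 < c := ENNReal.toReal_pos (measure_ball_pos volume _ hN0).ne' hμB_ne_top
  -- c ≥ N ^ 2
  have hvol : volume B = ENNReal.ofReal (N^2 * Real.pi) := by
    rw [hB, EuclideanSpace.volume_ball]
    simp only [Fintype.card_fin]
    rw [show ((2:ℕ):ℝ) / 2 + 1 = 2 by norm_num]
    rw [Real.Gamma_two, div_one, Real.sq_sqrt Real.pi_pos.le]
    rw [← ENNReal.ofReal_pow hN0.le, ← ENNReal.ofReal_mul (by positivity)]
  have hcval : c = N^2 * Real.pi := by
    rw [hc, hvol, ENNReal.toReal_ofReal (by positivity)]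
  have hcN : N^2 ≤ c := by
    nlinarith [Real.pi_gt_three]
  -- integrability facts
  have hρint : IntegrableOn ρ B := by
    by_contra h
    rw [integral_undef h] at hmass
    linarith
  have hρm : AEStronglyMeasurable ρ (volume.restrict B) := hρint.1
  have hvc : Continuous v := hv.continuous
  have hvint : IntegrableOn v B := by
    refine Integrable.mono' (g := fun x => 1 + (v x)^2) ((integrable_const 1).add hvL2)
      hvc.aestronglyMeasurable.restrict ?_
    refine Filter.Eventually.of_forall fun x => ?_
    rw [Real.norm_eq_abs]
    show |v x| ≤ 1 + v x ^ 2
    nlinarith [sq_nonneg (|v x| - 1), sq_abs (v x), abs_nonneg (v x)]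
  have hgradm : AEStronglyMeasurable (fun x => ‖fderiv ℝ v x‖) (volume.restrict B) :=
    (measurable_fderiv ℝ v).norm.aestronglyMeasurable.restrict
  have hgint : IntegrableOn (fun x => ‖fderiv ℝ v x‖) B := by
    refine Integrable.mono' (g := fun x => 1 + ‖fderiv ℝ v x‖^2) ((integrable_const 1).add hgrad)
      hgradm ?_
    refine Filter.Eventually.of_forall fun x => ?_
    rw [Real.norm_eq_abs, abs_of_nonneg (norm_nonneg _)]
    show ‖fderiv ℝ v x‖ ≤ 1 + ‖fderiv ℝ v x‖ ^ 2
    nlinarith [sq_nonneg (‖fderiv ℝ v x‖ - 1), norm_nonneg (fderiv ℝ v x)]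
  have hρv2 : IntegrableOn (fun x => ρ x * (v x)^2) B := by
    refine Integrable.mono' (g := fun x => M₁ * (v x)^2) (hvL2.const_mul M₁)
      (hρm.mul ((hvc.pow 2).aestronglyMeasurable.restrict)) ?_
    refine Filter.Eventually.of_forall fun x => ?_
    rw [Real.norm_eq_abs, abs_mul, abs_of_nonneg (hρ x).1, abs_of_nonneg (sq_nonneg _)]
    show ρ x * v x ^ 2 ≤ M₁ * v x ^ 2
    exact mul_le_mul_of_nonneg_right (hρ x).2 (sq_nonneg _)
  have hρvint : IntegrableOn (fun x => ρ x * v x) B := by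
    refine Integrable.mono' (g := fun x => M₁ * |v x|) (hvint.abs.const_mul M₁)
      (hρm.mul hvc.aestronglyMeasurable.restrict) ?_
    refine Filter.Eventually.of_forall fun x => ?_
    rw [Real.norm_eq_abs, abs_mul, abs_of_nonneg (hρ x).1]
    show ρ x * |v x| ≤ M₁ * |v x|
    exact mul_le_mul_of_nonneg_right (hρ x).2 (abs_nonneg _)
  -- averages
  set ρb : ℝ := ⨍ x in B, ρ x with hρbdef
  set vb : ℝ := ⨍ x in B, v x with hvbdef
  have hρb : ρb = c⁻¹ * ∫ x in B, ρ x := by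
    rw [hρbdef, setAverage_eq, smul_eq_mul, measureReal_def, hc]
  have hvb : vb = c⁻¹ * ∫ x in B, v x := by
    rw [hvbdef, setAverage_eq, smul_eq_mul, measureReal_def, hc]
  have hintρ_nonneg : 0 ≤ ∫ x in B, ρ x := le_trans hM₂.le hmass
  have hintρ_le : ∫ x in B, ρ x ≤ M₁ * c := by
    calc ∫ x in B, ρ x ≤ ∫ _x in B, M₁ :=
          integral_mono hρint (integrable_const _) fun x => (hρ x).2
      _ = M₁ * c := by
          rw [integral_const, measureReal_restrict_apply_univ, measureReal_def, smul_eq_mul, ← hc, mul_comm]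
  have hρb_nonneg : 0 ≤ ρb := by
    rw [hρb]; positivity
  have hρb_le : ρb ≤ M₁ := by
    rw [hρb, inv_mul_le_iff₀ hc0]
    calc ∫ x in B, ρ x ≤ M₁ * c := hintρ_le
      _ = c * M₁ := mul_comm _ _
  -- key algebraic identity
  have hint_prod : IntegrableOn (fun x => (ρb - ρ x) * (v x - vb)) B := by
    have hfe : (fun x => (ρb - ρ x) * (v x - vb))
        = fun x => ρb * v x - ρb * vb - ρ x * v x + ρ x * vb := funext fun x => by ring
    rw [hfe]
    exact (((hvint.const_mul ρb).sub (integrable_const _)).sub hρvint).add (hρint.mul_const vb)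
  have hkey : c * (ρb * vb) = (∫ x in B, (ρb - ρ x) * (v x - vb)) + ∫ x in B, ρ x * v x := by
    have h1 : ∫ x in B, (ρb - ρ x) * (v x - vb)
        = ρb * (∫ x in B, v x) - ρb * vb * c - (∫ x in B, ρ x * v x)
          + vb * (∫ x in B, ρ x) := by
      calc ∫ x in B, (ρb - ρ x) * (v x - vb)
          = ∫ x in B, (ρb * v x - ρb * vb - ρ x * v x + ρ x * vb) :=
            integral_congr_ae (Filter.Eventually.of_forall fun x => by ring)
        _ = (∫ x in B, (ρb * v x - ρb * vb - ρ x * v x)) + ∫ x in B, ρ x * vb :=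
            integral_add (((hvint.const_mul ρb).sub (integrable_const _)).sub hρvint)
              (hρint.mul_const vb)
        _ = (∫ x in B, (ρb * v x - ρb * vb)) - (∫ x in B, ρ x * v x)
            + ∫ x in B, ρ x * vb :=
            congrArg (fun z => z + ∫ x in B, ρ x * vb)
              (integral_sub ((hvint.const_mul ρb).sub (integrable_const _)) hρvint)
        _ = (∫ x in B, ρb * v x) - (∫ x in B, (ρb * vb : ℝ)) - (∫ x in B, ρ x * v x)
            + ∫ x in B, ρ x * vb :=
            congrArg (fun z => z - (∫ x in B, ρ x * v x) + ∫ x in B, ρ x * vb)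
              (integral_sub (hvint.const_mul ρb) (integrable_const _))
        _ = ρb * (∫ x in B, v x) - ρb * vb * c - (∫ x in B, ρ x * v x)
            + vb * (∫ x in B, ρ x) := by
            rw [integral_const_mul, integral_const, integral_mul_const,
              measureReal_restrict_apply_univ, measureReal_def, smul_eq_mul, ← hc]
            ring
    have h2 : ∫ x in B, v x = c * vb := by
      rw [hvb]; field_simp
    have h3 : ∫ x in B, ρ x = c * ρb := by
      rw [hρb]; field_simp
    rw [h1, h2, h3]
    ring
  -- Poincaré in real form
  have hvmvb_int : IntegrableOn (fun x => |v x - vb|) B := (hvint.sub (integrable_const _)).abs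
  have hpoin := poincare hN0 v hv hvint
  rw [← hvbdef] at hpoin
  have hFlint_ne : (∫⁻ x in B, (‖fderiv ℝ v x‖₊ : ℝ≥0∞)) ≠ ⊤ := by
    have h := hgint.2
    rw [hasFiniteIntegral_def] at h
    simpa [enorm_norm, enorm_eq_nnnorm] using h.ne
  have hFint_eq : ∫ x in B, ‖fderiv ℝ v x‖ = (∫⁻ x in B, (‖fderiv ℝ v x‖₊ : ℝ≥0∞)).toReal := by
    rw [integral_eq_lintegral_of_nonneg_ae (Filter.Eventually.of_forall fun x => norm_nonneg _)
      hgradm]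
    simp only [ofReal_norm, enorm_eq_nnnorm]
  have hpoin_real : ∫ x in B, |v x - vb| ≤ 8 * N * ∫ x in B, ‖fderiv ℝ v x‖ := by
    have hlhs : ∫ x in B, |v x - vb| = (∫⁻ x in B, ENNReal.ofReal |v x - vb|).toReal := by
      rw [integral_eq_lintegral_of_nonneg_ae (Filter.Eventually.of_forall fun x => abs_nonneg _)
        hvmvb_int.aestronglyMeasurable]
    rw [hlhs]
    calc (∫⁻ x in B, ENNReal.ofReal |v x - vb|).toReal
        ≤ (ENNReal.ofReal (8 * N) * ∫⁻ x in B, (‖fderiv ℝ v x‖₊ : ℝ≥0∞)).toReal :=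
          ENNReal.toReal_mono (ENNReal.mul_ne_top ENNReal.ofReal_ne_top hFlint_ne) hpoin
      _ = 8 * N * ∫ x in B, ‖fderiv ℝ v x‖ := by
          rw [ENNReal.toReal_mul, ENNReal.toReal_ofReal (by positivity), hFint_eq]
  -- Cauchy-Schwarz for gradient
  set Q : ℝ := ∫ x in B, ‖fderiv ℝ v x‖ ^ 2 with hQ
  set R : ℝ := ∫ x in B, ρ x * (v x) ^ 2 with hR
  have hQnn : 0 ≤ Real.sqrt Q := Real.sqrt_nonneg _
  have hRnn : 0 ≤ Real.sqrt R := Real.sqrt_nonneg _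
  have hcs1 : ∫ x in B, ‖fderiv ℝ v x‖ ≤ Real.sqrt Q * Real.sqrt c := by
    have h := cs_int (volume.restrict B) (fun x => ‖fderiv ℝ v x‖) (fun _ => 1)
      (fun x => norm_nonneg _) (fun _ => zero_le_one) hgradm aestronglyMeasurable_const
      hgrad (by simpa using integrable_const (μ := volume.restrict B) (1:ℝ))
    simpa [integral_const, measureReal_restrict_apply_univ, measureReal_def, smul_eq_mul, ← hc] using h
  -- Cauchy-Schwarz for ρ v
  have hcs2 : ∫ x in B, ρ x * |v x| ≤ Real.sqrt (M₁ * c) * Real.sqrt R := by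
    have hsqm : AEStronglyMeasurable (fun x => Real.sqrt (ρ x)) (volume.restrict B) :=
      Real.continuous_sqrt.comp_aestronglyMeasurable hρm
    have habsm : AEStronglyMeasurable (fun x => Real.sqrt (ρ x) * |v x|) (volume.restrict B) :=
      hsqm.mul hvc.abs.aestronglyMeasurable.restrict
    have hf2 : Integrable (fun x => Real.sqrt (ρ x) ^ 2) (volume.restrict B) := by
      have : (fun x => Real.sqrt (ρ x) ^ 2) = ρ := funext fun x => Real.sq_sqrt (hρ x).1
      rw [this]; exact hρint
    have hg2 : Integrable (fun x => (Real.sqrt (ρ x) * |v x|) ^ 2) (volume.restrict B) := by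
      have : (fun x => (Real.sqrt (ρ x) * |v x|) ^ 2) = fun x => ρ x * (v x) ^ 2 :=
        funext fun x => by rw [mul_pow, Real.sq_sqrt (hρ x).1, sq_abs]
      rw [this]; exact hρv2
    have h := cs_int (volume.restrict B) (fun x => Real.sqrt (ρ x))
      (fun x => Real.sqrt (ρ x) * |v x|) (fun x => Real.sqrt_nonneg _)
      (fun x => mul_nonneg (Real.sqrt_nonneg _) (abs_nonneg _)) hsqm habsm hf2 hg2
    have heq : ∀ x, Real.sqrt (ρ x) * (Real.sqrt (ρ x) * |v x|) = ρ x * |v x| := fun x => by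
      rw [← mul_assoc, Real.mul_self_sqrt (hρ x).1]
    calc ∫ x in B, ρ x * |v x|
        = ∫ x in B, Real.sqrt (ρ x) * (Real.sqrt (ρ x) * |v x|) :=
          (integral_congr_ae (Filter.Eventually.of_forall fun x => (heq x))).symm
      _ ≤ Real.sqrt (∫ x in B, Real.sqrt (ρ x) ^ 2)
          * Real.sqrt (∫ x in B, (Real.sqrt (ρ x) * |v x|) ^ 2) := h
      _ = Real.sqrt (∫ x in B, ρ x) * Real.sqrt R := by
          rw [show (fun x => Real.sqrt (ρ x) ^ 2) = ρ from funext fun x => Real.sq_sqrt (hρ x).1,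
            show (fun x => (Real.sqrt (ρ x) * |v x|) ^ 2) = fun x => ρ x * (v x) ^ 2 from
              funext fun x => by rw [mul_pow, Real.sq_sqrt (hρ x).1, sq_abs], hR]
      _ ≤ Real.sqrt (M₁ * c) * Real.sqrt R :=
          mul_le_mul_of_nonneg_right (Real.sqrt_le_sqrt hintρ_le) hRnn
  -- bound the two terms
  have hb1 : |∫ x in B, (ρb - ρ x) * (v x - vb)| ≤ M₁ * (8 * N) * (Real.sqrt Q * Real.sqrt c) := by
    calc |∫ x in B, (ρb - ρ x) * (v x - vb)|
        ≤ ∫ x in B, |(ρb - ρ x) * (v x - vb)| := by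
          simpa only [Real.norm_eq_abs] using
            norm_integral_le_integral_norm (f := fun x => (ρb - ρ x) * (v x - vb))
              (μ := volume.restrict B)
      _ ≤ ∫ x in B, M₁ * |v x - vb| := by
          refine integral_mono hint_prod.abs (hvmvb_int.const_mul M₁) fun x => ?_
          show |(ρb - ρ x) * (v x - vb)| ≤ M₁ * |v x - vb|
          rw [abs_mul]
          refine mul_le_mul_of_nonneg_right ?_ (abs_nonneg _)
          rw [abs_le]
          constructor <;> [linarith [(hρ x).2, hρb_nonneg]; linarith [(hρ x).1, hρb_le]]
      _ = M₁ * ∫ x in B, |v x - vb| := integral_const_mul _ _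
      _ ≤ M₁ * (8 * N * ∫ x in B, ‖fderiv ℝ v x‖) :=
          mul_le_mul_of_nonneg_left hpoin_real hM₁.le
      _ ≤ M₁ * (8 * N * (Real.sqrt Q * Real.sqrt c)) := by
          refine mul_le_mul_of_nonneg_left ?_ hM₁.le
          exact mul_le_mul_of_nonneg_left hcs1 (by positivity)
      _ = M₁ * (8 * N) * (Real.sqrt Q * Real.sqrt c) := by ring
  have hb2 : |∫ x in B, ρ x * v x| ≤ Real.sqrt (M₁ * c) * Real.sqrt R := by
    calc |∫ x in B, ρ x * v x| ≤ ∫ x in B, |ρ x * v x| := by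
          simpa only [Real.norm_eq_abs] using
            norm_integral_le_integral_norm (f := fun x => ρ x * v x) (μ := volume.restrict B)
      _ = ∫ x in B, ρ x * |v x| :=
          integral_congr_ae (Filter.Eventually.of_forall fun x => by
            show |ρ x * v x| = ρ x * |v x|
            rw [abs_mul, abs_of_nonneg (hρ x).1])
      _ ≤ Real.sqrt (M₁ * c) * Real.sqrt R := hcs2
  -- final assembly
  have hsc : Real.sqrt c * Real.sqrt c = c := Real.mul_self_sqrt hc0.le
  have hscN : N ≤ Real.sqrt c := by
    have : Real.sqrt (N^2) ≤ Real.sqrt c := Real.sqrt_le_sqrt hcN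
    rwa [Real.sqrt_sq hN0.le] at this
  have hscnn : 0 ≤ Real.sqrt c := Real.sqrt_nonneg _
  have hM₁nn : 0 ≤ Real.sqrt M₁ := Real.sqrt_nonneg _
  have habs : c * |ρb * vb| ≤ M₁ * (8 * N) * (Real.sqrt Q * Real.sqrt c)
      + Real.sqrt (M₁ * c) * Real.sqrt R := by
    calc c * |ρb * vb| = |c * (ρb * vb)| := by
          rw [abs_mul c (ρb * vb), abs_of_pos hc0]
      _ = |(∫ x in B, (ρb - ρ x) * (v x - vb)) + ∫ x in B, ρ x * v x| := by rw [hkey]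
      _ ≤ |∫ x in B, (ρb - ρ x) * (v x - vb)| + |∫ x in B, ρ x * v x| := abs_add_le _ _
      _ ≤ _ := add_le_add hb1 hb2
  have hfin : M₁ * (8 * N) * (Real.sqrt Q * Real.sqrt c) + Real.sqrt (M₁ * c) * Real.sqrt R
      ≤ c * (8 * M₁ * Real.sqrt Q + Real.sqrt M₁ * N⁻¹ * Real.sqrt R) := by
    rw [Real.sqrt_mul hM₁.le]
    set s : ℝ := Real.sqrt c with hs
    rw [← hsc]
    have hh : 1 ≤ N⁻¹ * s := by
      rw [← inv_mul_cancel₀ hN0.ne']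
      exact mul_le_mul_of_nonneg_left hscN (inv_nonneg.2 hN0.le)
    have h1 : M₁ * (8 * N) * (Real.sqrt Q * s) ≤ (s * s) * (8 * M₁ * Real.sqrt Q) := by
      nlinarith [mul_nonneg (mul_nonneg (mul_nonneg hM₁.le hQnn) hscnn) (sub_nonneg.2 hscN)]
    have h2 : Real.sqrt M₁ * s * Real.sqrt R ≤ (s * s) * (Real.sqrt M₁ * N⁻¹ * Real.sqrt R) := by
      nlinarith [mul_nonneg (mul_nonneg (mul_nonneg hM₁nn hRnn) hscnn) (sub_nonneg.2 hh)]
    linarith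
  calc |ρb * vb| = c⁻¹ * (c * |ρb * vb|) := by field_simp
    _ ≤ c⁻¹ * (c * (8 * M₁ * Real.sqrt Q + Real.sqrt M₁ * N⁻¹ * Real.sqrt R)) := by
        refine mul_le_mul_of_nonneg_left (habs.trans hfin) (inv_nonneg.2 hc0.le)
    _ = 8 * M₁ * Real.sqrt Q + Real.sqrt M₁ * N⁻¹ * Real.sqrt R := by
        field_simp
end

section
/- Let T > 0, let y, b ∈ W^{1,1}(0,T) and g ∈ C(ℝ) satisfy y'(t) = g(y(t)) + b'(t) a.e. on [0,T] with y(0) = y⁰. Assume g(s) → −∞ as s → ∞, and that there exist N₀ ≥ 0, N₁ ≥ 0 with b(t₂) − b(t₁) ≤ N₀ + N₁(t₂ − t₁) for all 0 ≤ t₁ < t₂ ≤ T. Let ζ̄ be such that g(ζ) ≤ −N₁ for all ζ ≥ ζ̄. Then y(t) ≤ max{y⁰, ζ̄} + N₀ for all t ∈ [0,T]. -/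
open Set MeasureTheory

/-- Zlotnik's inequality. -/
theorem zlotnik_inequality (T : ℝ) (hT : 0 < T) (y b g : ℝ → ℝ)
    (hg : Continuous g)
    (hy : ContinuousOn y (Icc 0 T)) (hb : ContinuousOn b (Icc 0 T))
    (heq : ∀ t₁ t₂, 0 ≤ t₁ → t₁ ≤ t₂ → t₂ ≤ T →
      y t₂ - y t₁ = (∫ s in t₁..t₂, g (y s)) + (b t₂ - b t₁))
    (hglim : Filter.Tendsto g Filter.atTop Filter.atBot)
    (N₀ N₁ : ℝ) (hN₀ : 0 ≤ N₀) (hN₁ : 0 ≤ N₁)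
    (hbinc : ∀ t₁ t₂, 0 ≤ t₁ → t₁ < t₂ → t₂ ≤ T → b t₂ - b t₁ ≤ N₀ + N₁ * (t₂ - t₁))
    (ζ : ℝ) (hζ : ∀ z, ζ ≤ z → g z ≤ -N₁) :
    ∀ t ∈ Icc (0 : ℝ) T, y t ≤ max (y 0) ζ + N₀ := by
  intro t ht
  by_contra hcon
  push_neg at hcon
  set M := max (y 0) ζ with hM
  set S := Icc 0 t ∩ y ⁻¹' (Iic M) with hS
  have hsub : Icc 0 t ⊆ Icc 0 T := Icc_subset_Icc le_rfl ht.2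
  have hSclosed : IsClosed S :=
    (hy.mono hsub).preimage_isClosed_of_isClosed isClosed_Icc isClosed_Iic
  have hSne : S.Nonempty := ⟨0, ⟨le_rfl, ht.1⟩, show y 0 ≤ M from le_max_left _ _⟩
  have hSbdd : BddAbove S := ⟨t, fun s hs => hs.1.2⟩
  set t₁ := sSup S with ht₁
  have ht₁S : t₁ ∈ S := hSclosed.csSup_mem hSne hSbdd
  have ht₁0 : 0 ≤ t₁ := ht₁S.1.1
  have ht₁t : t₁ ≤ t := ht₁S.1.2
  have hyt₁ : y t₁ ≤ M := ht₁S.2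
  have ht₁lt : t₁ < t := by
    rcases lt_or_eq_of_le ht₁t with h | h
    · exact h
    · exfalso; rw [h] at hyt₁; linarith
  have hIoc : ∀ s ∈ Ioc t₁ t, ζ ≤ y s := by
    intro s hs
    by_contra h
    push_neg at h
    have hsS : s ∈ S :=
      ⟨⟨le_trans ht₁0 hs.1.le, hs.2⟩, show y s ≤ M from le_trans h.le (le_max_right _ _)⟩
    exact absurd (le_csSup hSbdd hsS) (not_le.mpr hs.1)
  have hint : IntegrableOn (fun s => g (y s)) (Ioc t₁ t) := by
    have hc : ContinuousOn (fun s => g (y s)) (Icc t₁ t) :=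
      hg.comp_continuousOn (hy.mono (le_trans (Icc_subset_Icc ht₁0 le_rfl) hsub))
    exact hc.integrableOn_Icc.mono_set Ioc_subset_Icc_self
  have hIle : (∫ s in t₁..t, g (y s)) ≤ -N₁ * (t - t₁) := by
    rw [intervalIntegral.integral_of_le ht₁t]
    have h1 : (∫ s in Ioc t₁ t, g (y s)) ≤ ∫ _s in Ioc t₁ t, (-N₁ : ℝ) :=
      setIntegral_mono_on hint (integrableOn_const measure_Ioc_lt_top.ne)
        measurableSet_Ioc (fun s hs => hζ _ (hIoc s hs))
    have h2 : (∫ _s in Ioc t₁ t, (-N₁ : ℝ)) = -N₁ * (t - t₁) := by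
      rw [setIntegral_const, Real.volume_real_Ioc_of_le ht₁t, smul_eq_mul,
        mul_comm]
    linarith
  have hb' := hbinc t₁ t ht₁0 ht₁lt ht.2
  have heq' := heq t₁ t ht₁0 ht₁t ht.2
  linarith
end
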